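/- Asymptotic compatibility of the Euler integrals with the Kepler reference at o₁: for every fixed p ∈ ℝ³, the function q ↦ G(q,p) − G_{r₁}(q,p) (which equals μ₂[(a(z+a) − 1)/r₁(q) − (a(z−a) + 1)/r₂(q)] and is independent of p) tends to 0 as ‖q‖ → ∞ with q ∈ ℝ³ ∖ {o₁, o₂}. -/

import Mathlib

noncomputable section

open Real Filter Topology
open scoped RealInnerProductSpace

/-- Euclidean 3-space. -/
abbrev R3 : Type := EuclideanSpace ℝ (Fin 3)

/-- The vector `(x, y, z)` in `R3`. -/
def vec3 (x y z : ℝ) : R3 := (WithLp.equiv 2 (Fin 3 → ℝ)).symm ![x, y, z]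

/-- The first center `o₁ = (0,0,-a)`. -/
def ctr1 (a : ℝ) : R3 := vec3 0 0 (-a)

/-- The second center `o₂ = (0,0,a)`. -/
def ctr2 (a : ℝ) : R3 := vec3 0 0 a

/-- The Euler two-center potential `V(q) = -μ₁/r₁(q) - μ₂/r₂(q)`. -/
def eulerV (a μ1 μ2 : ℝ) (q : R3) : ℝ := -μ1 / ‖q - ctr1 a‖ - μ2 / ‖q - ctr2 a‖

/-- The angular momentum `L_z(q,p) = x p_y - y p_x`. -/
def angMom (q p : R3) : ℝ := q 0 * p 1 - q 1 * p 0

/-- The cross product `q × p` in `R3`. -/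
def cross3 (q p : R3) : R3 :=
  vec3 (q 1 * p 2 - q 2 * p 1) (q 2 * p 0 - q 0 * p 2) (q 0 * p 1 - q 1 * p 0)

/-- The Euler Hamiltonian `H(q,p) = ‖p‖²/2 + V(q)`. -/
def eulerH (a μ1 μ2 : ℝ) (q p : R3) : ℝ := ‖p‖ ^ 2 / 2 + eulerV a μ1 μ2 q

/-- The separation constant
`G(q,p) = H + (‖q×p‖² - a²(pₓ²+p_y²))/2 + a(z+a)μ₁/r₁ - a(z-a)μ₂/r₂`. -/
def eulerG (a μ1 μ2 : ℝ) (q p : R3) : ℝ :=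
  eulerH a μ1 μ2 q p + (‖cross3 q p‖ ^ 2 - a ^ 2 * ((p 0) ^ 2 + (p 1) ^ 2)) / 2
    + a * (q 2 + a) * μ1 / ‖q - ctr1 a‖ - a * (q 2 - a) * μ2 / ‖q - ctr2 a‖

/-- The reference Kepler potential at `o₁`: `V_{r₁}(q) = -(μ₁-μ₂)/r₁(q)`. -/
def kepV1 (a μ1 μ2 : ℝ) (q : R3) : ℝ := -(μ1 - μ2) / ‖q - ctr1 a‖

/-- The reference Kepler Hamiltonian at `o₁`. -/
def kepH1 (a μ1 μ2 : ℝ) (q p : R3) : ℝ := ‖p‖ ^ 2 / 2 + kepV1 a μ1 μ2 q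

/-- The separation constant of the reference Kepler system at `o₁`. -/
def kepG1 (a μ1 μ2 : ℝ) (q p : R3) : ℝ :=
  kepH1 a μ1 μ2 q p + (‖cross3 q p‖ ^ 2 - a ^ 2 * ((p 0) ^ 2 + (p 1) ^ 2)) / 2
    + a * (q 2 + a) * (μ1 - μ2) / ‖q - ctr1 a‖

lemma abs_coord_le (x : R3) (i : Fin 3) : |x i| ≤ ‖x‖ := by
  rw [EuclideanSpace.norm_eq, ← Real.sqrt_sq_eq_abs]
  apply Real.sqrt_le_sqrt
  have := Finset.single_le_sum (f := fun j => ‖x j‖ ^ 2) (fun j _ => by positivity)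
    (Finset.mem_univ i)
  simpa [Real.norm_eq_abs, sq_abs] using this

lemma norm_ctr1 (a : ℝ) (ha : 0 < a) : ‖ctr1 a‖ = a := by
  simp only [ctr1, vec3, EuclideanSpace.norm_eq, Fin.sum_univ_three, WithLp.equiv_symm_apply, PiLp.toLp_apply, Matrix.cons_val_two, Matrix.tail_cons, Matrix.head_cons]
  norm_num [Real.norm_eq_abs, sq_abs]
  rw [Real.sqrt_sq ha.le]

lemma norm_ctr2 (a : ℝ) (ha : 0 < a) : ‖ctr2 a‖ = a := by
  simp only [ctr2, vec3, EuclideanSpace.norm_eq, Fin.sum_univ_three, WithLp.equiv_symm_apply, PiLp.toLp_apply, Matrix.cons_val_two, Matrix.tail_cons, Matrix.head_cons]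
  norm_num [Real.norm_eq_abs, sq_abs]
  rw [Real.sqrt_sq ha.le]

lemma norm_ctr_sub_ctr (a : ℝ) (ha : 0 < a) : ‖ctr1 a - ctr2 a‖ = 2 * a := by
  rw [EuclideanSpace.norm_eq, Fin.sum_univ_three]
  simp only [ctr1, ctr2, vec3, PiLp.sub_apply, WithLp.equiv_symm_apply, PiLp.toLp_apply, Matrix.cons_val_two, Matrix.tail_cons, Matrix.head_cons]
  norm_num [Real.norm_eq_abs, sq_abs]
  rw [show -a - a = -(2*a) by ring, neg_sq, Real.sqrt_sq (by linarith)]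

lemma coord2_sub_ctr1 (q : R3) (a : ℝ) : (q - ctr1 a) 2 = q 2 + a := by
  simp [ctr1, vec3, PiLp.sub_apply, WithLp.equiv_symm_apply, PiLp.toLp_apply, Matrix.cons_val_two, Matrix.tail_cons, Matrix.head_cons]

/-- Asymptotic compatibility of the Euler integrals with the Kepler
reference at `o₁`: `G − G_{r₁} = μ₂[(a(z+a)−1)/r₁ − (a(z−a)+1)/r₂]` (independent of `p`)
and it tends to `0` as `‖q‖ → ∞` with `q ∈ ℝ³ ∖ {o₁,o₂}`. -/
theorem statement14 (a μ1 μ2 : ℝ) (ha : 0 < a) :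
    (∀ q : R3, q ≠ ctr1 a → q ≠ ctr2 a → ∀ p : R3,
      eulerG a μ1 μ2 q p - kepG1 a μ1 μ2 q p =
        μ2 * ((a * (q 2 + a) - 1) / ‖q - ctr1 a‖ - (a * (q 2 - a) + 1) / ‖q - ctr2 a‖)) ∧
    ∀ p : R3,
      Tendsto (fun q : R3 => eulerG a μ1 μ2 q p - kepG1 a μ1 μ2 q p)
        (comap (fun q : R3 => ‖q‖) atTop ⊓ 𝓟 {q : R3 | q ≠ ctr1 a ∧ q ≠ ctr2 a})
        (𝓝 0) := by
  have key : ∀ q : R3, q ≠ ctr1 a → q ≠ ctr2 a → ∀ p : R3,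
      eulerG a μ1 μ2 q p - kepG1 a μ1 μ2 q p =
        μ2 * ((a * (q 2 + a) - 1) / ‖q - ctr1 a‖ - (a * (q 2 - a) + 1) / ‖q - ctr2 a‖) := by
    intro q h1 h2 p
    have hr1 : ‖q - ctr1 a‖ ≠ 0 := by simpa [sub_eq_zero] using h1
    have hr2 : ‖q - ctr2 a‖ ≠ 0 := by simpa [sub_eq_zero] using h2
    simp only [eulerG, kepG1, eulerH, kepH1, eulerV, kepV1]
    field_simp
    ring
  refine ⟨key, fun p => ?_⟩
  set L := comap (fun q : R3 => ‖q‖) atTop ⊓ 𝓟 {q : R3 | q ≠ ctr1 a ∧ q ≠ ctr2 a} with hLdef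
  have hmem : ∀ᶠ q in L, q ≠ ctr1 a ∧ q ≠ ctr2 a :=
    (eventually_principal.2 fun q hq => hq).filter_mono inf_le_right
  have hnormT : Tendsto (fun q : R3 => ‖q‖) L atTop := tendsto_comap.mono_left inf_le_left
  have hbig : ∀ᶠ q in L, 2 * a ≤ ‖q‖ := hnormT.eventually (eventually_ge_atTop (2 * a))
  apply squeeze_zero_norm' (a := fun q : R3 => |μ2| * (4 * a ^ 2 + 2) / (‖q‖ - a))
  · filter_upwards [hmem, hbig] with q hq hb
    rw [key q hq.1 hq.2 p]
    set r1 := ‖q - ctr1 a‖ with hr1def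
    set r2 := ‖q - ctr2 a‖ with hr2def
    have hm : 0 < ‖q‖ - a := by linarith
    have hmr1 : ‖q‖ - a ≤ r1 := by
      have := norm_sub_norm_le q (ctr1 a); rw [norm_ctr1 a ha] at this; linarith
    have hmr2 : ‖q‖ - a ≤ r2 := by
      have := norm_sub_norm_le q (ctr2 a); rw [norm_ctr2 a ha] at this; linarith
    have hr1p : 0 < r1 := lt_of_lt_of_le hm hmr1
    have hr2p : 0 < r2 := lt_of_lt_of_le hm hmr2
    have hs : |q 2 + a| ≤ r1 := by
      have := abs_coord_le (q - ctr1 a) 2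
      rwa [coord2_sub_ctr1] at this
    have hd : |r2 - r1| ≤ 2 * a := by
      have h := abs_norm_sub_norm_le (q - ctr2 a) (q - ctr1 a)
      have he : (q - ctr2 a) - (q - ctr1 a) = ctr1 a - ctr2 a := by abel
      rw [he, norm_ctr_sub_ctr a ha] at h
      exact h
    set z := q 2
    have hX : (a * (z + a) - 1) / r1 - (a * (z - a) + 1) / r2 =
        (a * (z + a) * (r2 - r1) + 2 * a ^ 2 * r1 - r1 - r2) / (r1 * r2) := by
      field_simp
      ring
    have hs' := abs_le.1 hs
    have hd' := abs_le.1 hd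
    have hN : |a * (z + a) * (r2 - r1) + 2 * a ^ 2 * r1 - r1 - r2| ≤
        4 * a ^ 2 * r1 + r1 + r2 := by
      rw [abs_le]
      constructor <;>
        nlinarith [mul_nonneg (mul_nonneg ha.le (by linarith : (0:ℝ) ≤ r1 - (z + a)))
            (by linarith : (0:ℝ) ≤ 2 * a + (r2 - r1)),
          mul_nonneg (mul_nonneg ha.le (by linarith : (0:ℝ) ≤ r1 + (z + a)))
            (by linarith : (0:ℝ) ≤ 2 * a - (r2 - r1)),
          mul_nonneg (mul_nonneg ha.le (by linarith : (0:ℝ) ≤ r1 - (z + a)))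
            (by linarith : (0:ℝ) ≤ 2 * a - (r2 - r1)),
          mul_nonneg (mul_nonneg ha.le (by linarith : (0:ℝ) ≤ r1 + (z + a)))
            (by linarith : (0:ℝ) ≤ 2 * a + (r2 - r1))]
    have hXb : |(a * (z + a) - 1) / r1 - (a * (z - a) + 1) / r2| ≤
        (4 * a ^ 2 + 2) / (‖q‖ - a) := by
      rw [hX, abs_div, abs_of_pos (mul_pos hr1p hr2p)]
      calc |a * (z + a) * (r2 - r1) + 2 * a ^ 2 * r1 - r1 - r2| / (r1 * r2)
          ≤ (4 * a ^ 2 * r1 + r1 + r2) / (r1 * r2) := by gcongr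
        _ ≤ (4 * a ^ 2 + 2) / (‖q‖ - a) := by
            rw [div_le_div_iff₀ (mul_pos hr1p hr2p) hm]
            nlinarith [mul_nonneg (by positivity : (0:ℝ) ≤ 4 * a ^ 2 * r1)
                (by linarith : (0:ℝ) ≤ r2 - (‖q‖ - a)),
              mul_nonneg hr1p.le (by linarith : (0:ℝ) ≤ r2 - (‖q‖ - a)),
              mul_nonneg hr2p.le (by linarith : (0:ℝ) ≤ r1 - (‖q‖ - a))]
    rw [Real.norm_eq_abs, abs_mul, mul_div_assoc]
    exact mul_le_mul_of_nonneg_left hXb (abs_nonneg μ2)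
  · have h2 : Tendsto (fun t : ℝ => |μ2| * (4 * a ^ 2 + 2) / (t - a)) atTop (𝓝 0) := by
      apply Tendsto.div_atTop tendsto_const_nhds
      simpa [sub_eq_add_neg] using tendsto_atTop_add_const_right atTop (-a) tendsto_id
    exact h2.comp hnormT
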